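/- Let A and B be finite types and let φ₀, φ₁ : A × B → ℂ be unit vectors. Then |⟨φ₀, φ₁⟩| ≤ F(ptrA φ₀, ptrA φ₁); that is, the overlap of any two purifications is at most the fidelity of the corresponding reduced density matrices. -/

import Mathlib

open scoped ComplexOrder
open Matrix

noncomputable section

/-- Partial trace over `A` of the outer product `|ψ⟩⟨ψ|`:
`(ptrA ψ) j q = ∑ i, ψ (i, j) * conj (ψ (i, q))`. -/
def ptrA {A B : Type*} [Fintype A] (ψ : A × B → ℂ) : Matrix B B ℂ :=
  fun j q => ∑ i : A, ψ (i, j) * (starRingEnd ℂ) (ψ (i, q))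

/-- The Kronecker product `S ⊗ I` with the identity on `B`, as a matrix on `A × B`. -/
def kronId {A B : Type*} [DecidableEq B] (S : Matrix A A ℂ) : Matrix (A × B) (A × B) ℂ :=
  Matrix.kroneckerMap (· * ·) S (1 : Matrix B B ℂ)

/-- `ptrA ψ` is a Gram matrix, hence positive semidefinite. -/
lemma ptrA_posSemidef {A B : Type*} [Fintype A] [Fintype B] (ψ : A × B → ℂ) :
    (ptrA ψ).PosSemidef := by
  set V : Matrix A B ℂ := Matrix.of fun i j => (starRingEnd ℂ) (ψ (i, j)) with hV
  have h := Matrix.posSemidef_conjTranspose_mul_self V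
  have heq : ptrA ψ = Vᴴ * V := by
    ext j q
    simp [Matrix.mul_apply, Matrix.conjTranspose_apply, ptrA, hV, mul_comm]
  rw [heq]; exact h

/-- The positive semidefinite square root of a positive semidefinite matrix
(the definition of `Matrix.PosSemidef.sqrt` in the older Mathlib, since removed). -/
def Matrix.PosSemidef.sqrt {n 𝕜 : Type*} [Fintype n] [DecidableEq n] [RCLike 𝕜]
    {A : Matrix n n 𝕜} (hA : A.PosSemidef) : Matrix n n 𝕜 :=
  hA.1.eigenvectorUnitary.1 * diagonal ((↑) ∘ (√·) ∘ hA.1.eigenvalues) *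
  (star hA.1.eigenvectorUnitary : Matrix n n 𝕜)

lemma Matrix.PosSemidef.posSemidef_sqrt {n 𝕜 : Type*} [Fintype n] [DecidableEq n] [RCLike 𝕜]
    {A : Matrix n n 𝕜} (hA : A.PosSemidef) : hA.sqrt.PosSemidef := by
  apply PosSemidef.mul_mul_conjTranspose_same
  refine posSemidef_diagonal_iff.mpr fun i ↦ ?_
  rw [Function.comp_apply, RCLike.nonneg_iff]
  constructor
  · simp only [Function.comp_apply, RCLike.ofReal_re]
    exact Real.sqrt_nonneg _
  · simp only [Function.comp_apply, RCLike.ofReal_im]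

lemma sqrt_mul_mul_sqrt_posSemidef {B : Type*} [Fintype B] [DecidableEq B]
    {ρ σ : Matrix B B ℂ} (hρ : ρ.PosSemidef) (hσ : σ.PosSemidef) :
    (hρ.sqrt * σ * hρ.sqrt).PosSemidef := by
  have h := hσ.mul_mul_conjTranspose_same hρ.sqrt
  rwa [hρ.posSemidef_sqrt.isHermitian.eq] at h

/-- The fidelity `F(ρ, σ) = tr √(√ρ * σ * √ρ)` of two positive semidefinite matrices. -/
def fidelity {B : Type*} [Fintype B] [DecidableEq B] {ρ σ : Matrix B B ℂ}
    (hρ : ρ.PosSemidef) (hσ : σ.PosSemidef) : ℝ :=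
  ((sqrt_mul_mul_sqrt_posSemidef hρ hσ).sqrt.trace).re

section AuxUhlmann
variable {m : Type*} [Fintype m] [DecidableEq m]

lemma cdg_mul (U : Matrix m m ℂ) (hU : star U * U = 1) (a b : m → ℂ) :
    (U * diagonal a * star U) * (U * diagonal b * star U)
      = U * diagonal (a * b) * star U := by
  have h : (U * diagonal a * star U) * (U * diagonal b * star U)
      = U * (diagonal a * (star U * U) * diagonal b) * star U := by
    noncomm_ring
  rw [h, hU, mul_one, diagonal_mul_diagonal]
  rfl

lemma Matrix.PosSemidef.sqrt_mul_self {A : Matrix m m ℂ} (hA : A.PosSemidef) :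
    hA.sqrt * hA.sqrt = A := by
  have hspec := hA.1.spectral_theorem
  rw [Unitary.conjStarAlgAut_apply] at hspec
  unfold Matrix.PosSemidef.sqrt
  rw [cdg_mul _ (Unitary.coe_star_mul_self _)]
  conv_rhs => rw [hspec]
  congr 2
  congr 1
  funext i
  simp only [Pi.mul_apply, Function.comp_apply]
  rw [← RCLike.ofReal_mul, Real.mul_self_sqrt (hA.eigenvalues_nonneg i)]

lemma cdg_H (U : Matrix m m ℂ) (a : m → ℂ) :
    (U * diagonal a * star U)ᴴ = U * diagonal (star a) * star U := by
  rw [conjTranspose_mul, conjTranspose_mul, diagonal_conjTranspose,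
    Matrix.star_eq_conjTranspose, conjTranspose_conjTranspose, Matrix.mul_assoc]

lemma cdg_one (U : Matrix m m ℂ) (hU : U * star U = 1) :
    U * diagonal (1 : m → ℂ) * star U = 1 := by
  rw [show (1 : m → ℂ) = fun _ => 1 from rfl, diagonal_one, Matrix.mul_one, hU]

lemma cdg_sub (U : Matrix m m ℂ) (a b : m → ℂ) :
    U * diagonal a * star U - U * diagonal b * star U
      = U * diagonal (a - b) * star U := by
  rw [show (a - b) = fun i => a i - b i from rfl, ← diagonal_sub,
    Matrix.mul_sub, Matrix.sub_mul]

lemma proj_compl_psd {P : Matrix m m ℂ} (h1 : Pᴴ = P) (h2 : P * P = P) :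
    ((1 : Matrix m m ℂ) - P).PosSemidef := by
  have key : (1 - P)ᴴ * (1 - P) = 1 - P := by
    rw [conjTranspose_sub, conjTranspose_one, h1]
    simp [Matrix.mul_sub, Matrix.sub_mul, h2]
  rw [← key]
  exact posSemidef_conjTranspose_mul_self _


lemma polar_aux {m n : Type*} [Fintype m] [Fintype n] [DecidableEq m] [DecidableEq n]
    (M : Matrix m n ℂ) (hρ : (M * Mᴴ).PosSemidef) :
    ∃ V : Matrix m n ℂ, M = hρ.sqrt * V ∧
      ((1 : Matrix n n ℂ) - Vᴴ * V).PosSemidef ∧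
      ((1 : Matrix m m ℂ) - V * Vᴴ).PosSemidef := by
  have hH : (M * Mᴴ).IsHermitian := hρ.1
  set U : Matrix m m ℂ := (hH.eigenvectorUnitary : Matrix m m ℂ) with hUdef
  have hU1 : star U * U = 1 := Unitary.coe_star_mul_self _
  have hU2 : U * star U = 1 := Unitary.coe_mul_star_self _
  set ev : m → ℝ := hH.eigenvalues with hevdef
  have hevnn : ∀ i, 0 ≤ ev i := hρ.eigenvalues_nonneg
  set e : m → ℂ := RCLike.ofReal ∘ ev with hedef
  set s : m → ℂ := RCLike.ofReal ∘ Real.sqrt ∘ ev with hsdef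
  set g : m → ℂ := fun i => (((if ev i = 0 then 0 else (Real.sqrt (ev i))⁻¹) : ℝ) : ℂ)
    with hgdef
  set p : m → ℂ := fun i => if ev i = 0 then 0 else 1 with hpdef
  have he : ∀ i, e i = ((ev i : ℝ) : ℂ) := fun i => rfl
  have hs' : ∀ i, s i = ((Real.sqrt (ev i) : ℝ) : ℂ) := fun i => rfl
  have hsqrt0 : ∀ i, ev i ≠ 0 → Real.sqrt (ev i) ≠ 0 := fun i h =>
    Real.sqrt_ne_zero'.mpr (lt_of_le_of_ne (hevnn i) (Ne.symm h))
  have hsg : s * g = p := by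
    funext i
    simp only [Pi.mul_apply, hs', hgdef, hpdef]
    by_cases h : ev i = 0
    · simp [h]
    · rw [if_neg h, if_neg h, ← Complex.ofReal_mul, mul_inv_cancel₀ (hsqrt0 i h)]
      norm_num
  have hgeg : g * e * g = p := by
    funext i
    simp only [Pi.mul_apply, he, hgdef, hpdef]
    by_cases h : ev i = 0
    · simp [h]
    · rw [if_neg h, if_neg h]
      push_cast
      rw [show ((Real.sqrt (ev i))⁻¹ : ℂ) * (ev i : ℂ) * ((Real.sqrt (ev i))⁻¹ : ℂ)
        = ((ev i : ℂ)) / (((Real.sqrt (ev i) : ℂ)) * ((Real.sqrt (ev i) : ℂ))) by ring]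
      rw [← Complex.ofReal_mul, Real.mul_self_sqrt (hevnn i)]
      rw [div_self (by exact_mod_cast h)]
  have h1pe : (1 - p) * e * (1 - p) = 0 := by
    funext i
    simp only [Pi.mul_apply, Pi.sub_apply, Pi.one_apply, Pi.zero_apply, he, hpdef]
    by_cases h : ev i = 0
    · simp [h]
    · simp [h]
  have hpp : p * p = p := by
    funext i
    simp only [Pi.mul_apply, hpdef]
    by_cases h : ev i = 0 <;> simp [h]
  have hpg : p * g = g := by
    funext i
    simp only [Pi.mul_apply, hpdef, hgdef]
    by_cases h : ev i = 0 <;> simp [h]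
  have hstarg : star g = g := by
    funext i; simp [hgdef]
  have hstarp : star p = p := by
    funext i
    simp only [Pi.star_apply, hpdef]
    by_cases h : ev i = 0 <;> simp [h]
  set G : Matrix m m ℂ := U * diagonal g * star U with hGdef
  set P : Matrix m m ℂ := U * diagonal p * star U with hPdef
  set V : Matrix m n ℂ := G * M with hVdef
  have hsqrt : hρ.sqrt = U * diagonal s * star U := rfl
  have hspec : M * Mᴴ = U * diagonal e * star U := by
    have := hH.spectral_theorem; rwa [Unitary.conjStarAlgAut_apply] at this
  have hGH : Gᴴ = G := by rw [hGdef, cdg_H, hstarg]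
  have hPH : Pᴴ = P := by rw [hPdef, cdg_H, hstarp]
  have hPP : P * P = P := by rw [hPdef, cdg_mul U hU1, hpp]
  -- P * M = M
  have hone : (1 : Matrix m m ℂ) - P = U * diagonal (1 - p) * star U := by
    rw [hPdef, ← cdg_sub U (1 : m → ℂ) p, cdg_one U hU2]
  have h1PH : ((1 : Matrix m m ℂ) - P)ᴴ = 1 - P := by
    rw [conjTranspose_sub, conjTranspose_one, hPH]
  have hz : ((1 - P) * M) * ((1 - P) * M)ᴴ = 0 := by
    have h1 : ((1 - P) * M) * ((1 - P) * M)ᴴ = (1 - P) * (M * Mᴴ) * (1 - P)ᴴ := by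
      rw [conjTranspose_mul]; simp only [Matrix.mul_assoc]
    rw [h1, h1PH, hspec, hone, cdg_mul U hU1, cdg_mul U hU1, h1pe,
      show (0 : m → ℂ) = fun _ => (0:ℂ) from rfl,
      diagonal_zero, Matrix.mul_zero, Matrix.zero_mul]
  have hPM : P * M = M := by
    have h0 : (1 - P) * M = 0 := self_mul_conjTranspose_eq_zero.mp hz
    rw [Matrix.sub_mul, Matrix.one_mul, sub_eq_zero] at h0
    exact h0.symm
  have hSV : hρ.sqrt * V = M := by
    rw [hsqrt, hVdef, hGdef, ← Matrix.mul_assoc, cdg_mul U hU1, hsg, ← hPdef, hPM]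
  have hVVH : V * Vᴴ = P := by
    have h1 : V * Vᴴ = G * (M * Mᴴ) * G := by
      rw [hVdef, conjTranspose_mul, hGH]; simp only [Matrix.mul_assoc]
    rw [h1, hspec, hGdef, cdg_mul U hU1, cdg_mul U hU1, hgeg]
  have hPV : P * V = V := by
    rw [hVdef, hPdef, hGdef, ← Matrix.mul_assoc, cdg_mul U hU1, hpg]
  have hQ : (Vᴴ * V) * (Vᴴ * V) = Vᴴ * V := by
    calc (Vᴴ * V) * (Vᴴ * V) = Vᴴ * ((V * Vᴴ) * V) := by simp only [Matrix.mul_assoc]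
    _ = Vᴴ * (P * V) := by rw [hVVH]
    _ = Vᴴ * V := by rw [hPV]
  have hQH : (Vᴴ * V)ᴴ = Vᴴ * V := by
    rw [conjTranspose_mul, conjTranspose_conjTranspose]
  refine ⟨V, hSV.symm, proj_compl_psd hQH hQ, ?_⟩
  rw [hVVH]
  exact proj_compl_psd hPH hPP


lemma psd_trace_re_nonneg {M : Matrix m m ℂ} (hM : M.PosSemidef) : 0 ≤ M.trace.re := by
  rw [Matrix.trace, Complex.re_sum]
  refine Finset.sum_nonneg fun i _ => ?_
  have h := hM.re_dotProduct_nonneg (Pi.single i 1)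
  simpa [dotProduct, mulVec, Pi.single_apply, Finset.sum_ite_eq, mul_comm] using h

lemma trace_re_le {X Y : Matrix m m ℂ} (h : (Y - X).PosSemidef) :
    X.trace.re ≤ Y.trace.re := by
  have h2 := psd_trace_re_nonneg h
  rw [Matrix.trace_sub, Complex.sub_re] at h2
  linarith

lemma sqrt_congr {A B : Matrix m m ℂ} (h : A = B) (hA : A.PosSemidef) (hB : B.PosSemidef) :
    hA.sqrt = hB.sqrt := by subst h; rfl

lemma trace_conjT_self_re (A : Matrix m m ℂ) :
    (Aᴴ * A).trace.re = ∑ p : m × m, Complex.normSq (A p.1 p.2) := by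
  have h : (Aᴴ * A).trace = ((∑ p : m × m, Complex.normSq (A p.1 p.2) : ℝ) : ℂ) := by
    rw [Matrix.trace, Fintype.sum_prod_type]
    push_cast
    rw [Finset.sum_comm]
    refine Finset.sum_congr rfl fun q _ => Finset.sum_congr rfl fun j _ => ?_
    simp [Matrix.diag_apply, Matrix.mul_apply, conjTranspose_apply, Complex.normSq_eq_conj_mul_self]
  rw [h, Complex.ofReal_re]

lemma abs_trace_CS (A B : Matrix m m ℂ) :
    ‖(Aᴴ * B).trace‖ ≤
      Real.sqrt ((Aᴴ * A).trace.re) * Real.sqrt ((Bᴴ * B).trace.re) := by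
  classical
  let a : EuclideanSpace ℂ (m × m) := WithLp.toLp 2 (fun p : m × m => A p.1 p.2)
  let b : EuclideanSpace ℂ (m × m) := WithLp.toLp 2 (fun p : m × m => B p.1 p.2)
  have hin : (Aᴴ * B).trace = inner ℂ a b := by
    rw [Matrix.trace]
    rw [show (inner ℂ a b : ℂ) = ∑ p : m × m, (starRingEnd ℂ) (a p) * b p by
      rw [PiLp.inner_apply]; simp [RCLike.inner_apply, mul_comm]]
    rw [Fintype.sum_prod_type, Finset.sum_comm]
    refine Finset.sum_congr rfl fun j _ => Finset.sum_congr rfl fun q _ => rfl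
  have hna : ‖a‖ = Real.sqrt ((Aᴴ * A).trace.re) := by
    rw [EuclideanSpace.norm_eq, trace_conjT_self_re]
    congr 1
    exact Finset.sum_congr rfl fun p _ => by
      show ‖A p.1 p.2‖ ^ 2 = _
      rw [Complex.sq_norm]
  have hnb : ‖b‖ = Real.sqrt ((Bᴴ * B).trace.re) := by
    rw [EuclideanSpace.norm_eq, trace_conjT_self_re]
    congr 1
    exact Finset.sum_congr rfl fun p _ => by
      show ‖B p.1 p.2‖ ^ 2 = _
      rw [Complex.sq_norm]
  calc ‖(Aᴴ * B).trace‖ = ‖(inner ℂ a b : ℂ)‖ := by rw [hin]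
  _ ≤ ‖a‖ * ‖b‖ := norm_inner_le_norm a b
  _ = _ := by rw [hna, hnb]

end AuxUhlmann

/-- The overlap of any two purifications is at most the fidelity of the corresponding
reduced density matrices. -/
theorem overlap_le_fidelity
    {A B : Type*} [Fintype A] [Fintype B] [DecidableEq A] [DecidableEq B]
    (φ₀ φ₁ : A × B → ℂ)
    (h₀ : ∑ k : A × B, (starRingEnd ℂ) (φ₀ k) * φ₀ k = 1)
    (h₁ : ∑ k : A × B, (starRingEnd ℂ) (φ₁ k) * φ₁ k = 1) :
    ‖∑ k : A × B, (starRingEnd ℂ) (φ₀ k) * φ₁ k‖ ≤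
      fidelity (ptrA_posSemidef φ₀) (ptrA_posSemidef φ₁) := by
  classical
  set M₀ : Matrix B A ℂ := Matrix.of fun j i => φ₀ (i, j) with hM0def
  set M₁ : Matrix B A ℂ := Matrix.of fun j i => φ₁ (i, j) with hM1def
  have hρ0' : M₀ * M₀ᴴ = ptrA φ₀ := by
    ext j q
    simp [Matrix.mul_apply, conjTranspose_apply, ptrA, hM0def]
  have hρ1' : M₁ * M₁ᴴ = ptrA φ₁ := by
    ext j q
    simp [Matrix.mul_apply, conjTranspose_apply, ptrA, hM1def]
  have hψ0 : (M₀ * M₀ᴴ).PosSemidef := hρ0' ▸ ptrA_posSemidef φ₀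
  have hψ1 : (M₁ * M₁ᴴ).PosSemidef := hρ1' ▸ ptrA_posSemidef φ₁
  obtain ⟨V₀, hV0eq, hV0a, hV0b⟩ := polar_aux M₀ hψ0
  obtain ⟨V₁, hV1eq, hV1a, hV1b⟩ := polar_aux M₁ hψ1
  set S₀ : Matrix B B ℂ := (ptrA_posSemidef φ₀).sqrt with hS0def
  set S₁ : Matrix B B ℂ := (ptrA_posSemidef φ₁).sqrt with hS1def
  have hS0 : hψ0.sqrt = S₀ := sqrt_congr hρ0' _ _
  have hS1 : hψ1.sqrt = S₁ := sqrt_congr hρ1' _ _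
  have hS0H : S₀ᴴ = S₀ := (ptrA_posSemidef φ₀).posSemidef_sqrt.1
  have hS1H : S₁ᴴ = S₁ := (ptrA_posSemidef φ₁).posSemidef_sqrt.1
  set X : Matrix B B ℂ := S₀ * S₁ with hXdef
  have hXX : (X * Xᴴ).PosSemidef := posSemidef_self_mul_conjTranspose X
  obtain ⟨W, hWeq, hWa, hWb⟩ := polar_aux X hXX
  set T : Matrix B B ℂ := hXX.sqrt with hTdef
  have hTpsd : T.PosSemidef := hXX.posSemidef_sqrt
  set R : Matrix B B ℂ := hTpsd.sqrt with hRdef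
  have hRpsd : R.PosSemidef := hTpsd.posSemidef_sqrt
  have hRR : R * R = T := hTpsd.sqrt_mul_self
  have hRH : Rᴴ = R := hRpsd.1
  -- fidelity equals trace of T
  have hfid : fidelity (ptrA_posSemidef φ₀) (ptrA_posSemidef φ₁) = T.trace.re := by
    have heq : S₀ * (ptrA φ₁) * S₀ = X * Xᴴ := by
      rw [show Xᴴ = S₁ * S₀ by rw [hXdef, conjTranspose_mul, hS1H, hS0H]]
      rw [← (ptrA_posSemidef φ₁).sqrt_mul_self, ← hS1def]
      simp only [Matrix.mul_assoc, hXdef]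
    unfold fidelity
    rw [sqrt_congr heq (sqrt_mul_mul_sqrt_posSemidef (ptrA_posSemidef φ₀) (ptrA_posSemidef φ₁)) hXX]
  -- overlap is a trace
  have hov : (∑ k : A × B, (starRingEnd ℂ) (φ₀ k) * φ₁ k) = (M₁ * M₀ᴴ).trace := by
    rw [Matrix.trace, Fintype.sum_prod_type, Finset.sum_comm]
    refine Finset.sum_congr rfl fun j _ => Finset.sum_congr rfl fun i _ => ?_
    simp [Matrix.diag_apply, Matrix.mul_apply, conjTranspose_apply, hM0def, hM1def, mul_comm]
  -- rewrite the trace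
  set K : Matrix B B ℂ := W * (V₁ * V₀ᴴ) with hKdef
  have htr : (M₁ * M₀ᴴ).trace = (T * K).trace := by
    rw [hV0eq, hV1eq]
    calc (S₁ * V₁ * (S₀ * V₀)ᴴ).trace
        = (S₁ * (V₁ * V₀ᴴ * S₀)).trace := by
          rw [conjTranspose_mul, hS0H]; simp only [Matrix.mul_assoc]
      _ = ((V₁ * V₀ᴴ * S₀) * S₁).trace := Matrix.trace_mul_comm _ _
      _ = ((V₁ * V₀ᴴ) * X).trace := by rw [hXdef]; simp only [Matrix.mul_assoc]
      _ = (X * (V₁ * V₀ᴴ)).trace := Matrix.trace_mul_comm _ _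
      _ = (T * K).trace := by rw [hWeq, hKdef]; simp only [Matrix.mul_assoc]
  -- contraction property of K
  have hK : K * Kᴴ = W * (V₁ * (V₀ᴴ * V₀) * V₁ᴴ) * Wᴴ := by
    simp only [hKdef, conjTranspose_mul, conjTranspose_conjTranspose, Matrix.mul_assoc]
  have step1 : (V₁ * ((1 : Matrix A A ℂ) - V₀ᴴ * V₀) * V₁ᴴ).PosSemidef :=
    hV0a.mul_mul_conjTranspose_same V₁
  have e1 : V₁ * ((1 : Matrix A A ℂ) - V₀ᴴ * V₀) * V₁ᴴ
      = V₁ * V₁ᴴ - V₁ * (V₀ᴴ * V₀) * V₁ᴴ := by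
    rw [Matrix.mul_sub, Matrix.mul_one, Matrix.sub_mul]
  have step2 : ((1 : Matrix B B ℂ) - V₁ * (V₀ᴴ * V₀) * V₁ᴴ).PosSemidef := by
    have h := hV1b.add (e1 ▸ step1)
    rwa [sub_add_sub_cancel] at h
  have step3 : (W * ((1 : Matrix B B ℂ) - V₁ * (V₀ᴴ * V₀) * V₁ᴴ) * Wᴴ).PosSemidef :=
    step2.mul_mul_conjTranspose_same W
  have e2 : W * ((1 : Matrix B B ℂ) - V₁ * (V₀ᴴ * V₀) * V₁ᴴ) * Wᴴ
      = W * Wᴴ - K * Kᴴ := by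
    rw [Matrix.mul_sub, Matrix.mul_one, Matrix.sub_mul, hK]
  have hKKH : ((1 : Matrix B B ℂ) - K * Kᴴ).PosSemidef := by
    have h := hWb.add (e2 ▸ step3)
    rwa [sub_add_sub_cancel] at h
  -- the trace bound
  have hbound1 : (R * (K * Kᴴ) * R).trace.re ≤ T.trace.re := by
    refine trace_re_le ?_
    have h := hKKH.mul_mul_conjTranspose_same R
    have e3 : R * ((1 : Matrix B B ℂ) - K * Kᴴ) * Rᴴ = T - R * (K * Kᴴ) * R := by
      rw [hRH, Matrix.mul_sub, Matrix.mul_one, Matrix.sub_mul, hRR]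
    rwa [e3] at h
  have hTtr : 0 ≤ T.trace.re := psd_trace_re_nonneg hTpsd
  -- Cauchy-Schwarz
  have hCS := abs_trace_CS (Kᴴ * R) R
  have hA1 : ((Kᴴ * R)ᴴ * R).trace = (T * K).trace := by
    have h1 : (Kᴴ * R)ᴴ * R = R * (K * R) := by
      rw [conjTranspose_mul, conjTranspose_conjTranspose, hRH]
      simp only [Matrix.mul_assoc]
    rw [h1, Matrix.trace_mul_comm, Matrix.mul_assoc, hRR, Matrix.trace_mul_comm]
  have hA2 : (Kᴴ * R)ᴴ * (Kᴴ * R) = R * (K * Kᴴ) * R := by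
    rw [conjTranspose_mul, conjTranspose_conjTranspose, hRH]
    simp only [Matrix.mul_assoc]
  have hA3 : Rᴴ * R = T := by rw [hRH, hRR]
  rw [hA2, hA3] at hCS
  rw [hov, htr, hfid]
  calc ‖(T * K).trace‖
      = ‖((Kᴴ * R)ᴴ * R).trace‖ := by rw [hA1]
    _ ≤ Real.sqrt ((R * (K * Kᴴ) * R).trace.re) * Real.sqrt (T.trace.re) := hCS
    _ ≤ Real.sqrt (T.trace.re) * Real.sqrt (T.trace.re) := by
        apply mul_le_mul_of_nonneg_right (Real.sqrt_le_sqrt hbound1) (Real.sqrt_nonneg _)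
    _ = T.trace.re := Real.mul_self_sqrt hTtr
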